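/- Let G = SU(d) (as unitary matrices with determinant 1) and let g, h ∈ G satisfy ‖g − I‖ < 1/√2 and ‖h − I‖ < 1/√2 in Frobenius norm, with gh ≠ hg. Then the subgroup generated by g and h is infinite. -/

import Mathlib

open scoped Matrix

/-- The Hilbert–Schmidt (Frobenius) norm `‖M‖ = √(tr(M M†))`. -/
noncomputable def frobNorm {d : ℕ} (M : Matrix (Fin d) (Fin d) ℂ) : ℝ :=
  Real.sqrt ((M * Mᴴ).trace.re)

namespace FrobAux

attribute [local instance] Matrix.frobeniusSeminormedAddCommGroup
  Matrix.frobeniusNormedAddCommGroup Matrix.frobeniusNormedSpace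

variable {d : ℕ}

local notation "Mat" => Matrix (Fin d) (Fin d) ℂ

instance unitaryBracket : Bracket (Matrix.unitaryGroup (Fin d) ℂ) (Matrix.unitaryGroup (Fin d) ℂ) :=
  commutatorElement

noncomputable def fsq (M : Mat) : ℝ := ∑ i, ∑ j, ‖M i j‖ ^ 2

lemma fsq_nonneg (M : Mat) : 0 ≤ fsq M := by unfold fsq; positivity

lemma norm_eq_sqrt_fsq (M : Mat) : ‖M‖ = Real.sqrt (fsq M) := by
  rw [Matrix.frobenius_norm_def, Real.sqrt_eq_rpow, fsq]; norm_num

lemma sq_norm (M : Mat) : ‖M‖ ^ 2 = fsq M := by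
  rw [norm_eq_sqrt_fsq, Real.sq_sqrt (fsq_nonneg M)]

lemma fsq_eq_trace (M : Mat) : (M * Mᴴ).trace.re = fsq M := by
  have h : (M * Mᴴ).trace = ∑ i, ∑ j, M i j * (starRingEnd ℂ) (M i j) := by
    simp [Matrix.trace, Matrix.diag, Matrix.mul_apply, Matrix.conjTranspose_apply]
  rw [h, Complex.re_sum, fsq]
  refine Finset.sum_congr rfl fun i _ => ?_
  rw [Complex.re_sum]
  refine Finset.sum_congr rfl fun j _ => ?_
  rw [Complex.mul_conj]
  rw [Complex.ofReal_re, Complex.normSq_eq_norm_sq]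

lemma fsq_mul_unitary (M : Mat) {u : Mat} (hu : u ∈ Matrix.unitaryGroup (Fin d) ℂ) :
    fsq (M * u) = fsq M := by
  rw [← fsq_eq_trace, ← fsq_eq_trace M]
  congr 2
  have h : u * star u = 1 := Matrix.mem_unitaryGroup_iff.mp hu
  rw [Matrix.conjTranspose_mul, ← Matrix.star_eq_conjTranspose u,
    Matrix.mul_assoc, ← Matrix.mul_assoc u, h, Matrix.one_mul]

lemma fsq_unitary_mul (M : Mat) {u : Mat} (hu : u ∈ Matrix.unitaryGroup (Fin d) ℂ) :
    fsq (u * M) = fsq M := by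
  rw [← fsq_eq_trace, ← fsq_eq_trace M]
  have h : star u * u = 1 := Matrix.mem_unitaryGroup_iff'.mp hu
  have : (u * M) * (u * M)ᴴ = u * (M * Mᴴ) * star u := by
    rw [Matrix.conjTranspose_mul, ← Matrix.star_eq_conjTranspose u]
    noncomm_ring
  rw [this, Matrix.trace_mul_cycle, ← Matrix.mul_assoc, h, Matrix.one_mul]

lemma norm_mul_unitary (M : Mat) {u : Mat} (hu : u ∈ Matrix.unitaryGroup (Fin d) ℂ) :
    ‖M * u‖ = ‖M‖ := by
  rw [norm_eq_sqrt_fsq, norm_eq_sqrt_fsq, fsq_mul_unitary M hu]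

lemma norm_unitary_mul (M : Mat) {u : Mat} (hu : u ∈ Matrix.unitaryGroup (Fin d) ℂ) :
    ‖u * M‖ = ‖M‖ := by
  rw [norm_eq_sqrt_fsq, norm_eq_sqrt_fsq, fsq_unitary_mul M hu]

lemma norm_conj (M : Mat) {u : Mat} (hu : u ∈ Matrix.unitaryGroup (Fin d) ℂ) :
    ‖u * M * star u‖ = ‖M‖ := by
  rw [norm_mul_unitary _ (Unitary.star_mem hu), norm_unitary_mul _ hu]

lemma mulVec_fsq_le (M : Mat) (v : Fin d → ℂ) :
    (∑ i, ‖(M *ᵥ v) i‖ ^ 2) ≤ fsq M * ∑ j, ‖v j‖ ^ 2 := by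
  rw [fsq, Finset.sum_mul]
  refine Finset.sum_le_sum fun i _ => ?_
  have h1 : ‖(M *ᵥ v) i‖ ≤ ∑ j, ‖M i j‖ * ‖v j‖ := by
    rw [Matrix.mulVec, dotProduct]
    refine (norm_sum_le _ _).trans ?_
    simp [norm_mul]
  calc ‖(M *ᵥ v) i‖ ^ 2 ≤ (∑ j, ‖M i j‖ * ‖v j‖) ^ 2 := by
        exact pow_le_pow_left₀ (norm_nonneg _) h1 2
    _ ≤ (∑ j, ‖M i j‖ ^ 2) * ∑ j, ‖v j‖ ^ 2 :=
        Finset.sum_mul_sq_le_sq_mul_sq _ _ _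

lemma sq_le_fsq_of_eig {M : Mat} {v : Fin d → ℂ} {c : ℂ} (hv : v ≠ 0)
    (h : M *ᵥ v = c • v) : ‖c‖ ^ 2 ≤ fsq M := by
  have ht : 0 < ∑ j, ‖v j‖ ^ 2 := by
    obtain ⟨j0, hj0⟩ := Function.ne_iff.mp hv
    refine Finset.sum_pos' (fun j _ => by positivity) ⟨j0, Finset.mem_univ _, ?_⟩
    have h0 : v j0 ≠ 0 := hj0
    have : 0 < ‖v j0‖ := norm_pos_iff.mpr h0
    positivity
  have hle := mulVec_fsq_le M v
  rw [h] at hle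
  have hlhs : (∑ i, ‖(c • v) i‖ ^ 2) = ‖c‖ ^ 2 * ∑ j, ‖v j‖ ^ 2 := by
    rw [Finset.mul_sum]
    refine Finset.sum_congr rfl fun i _ => ?_
    simp [norm_smul, mul_pow]
  rw [hlhs] at hle
  exact le_of_mul_le_mul_right hle ht

lemma one_le_norm_one_sub_of_det_eq_zero {X : Mat} (hX : X.det = 0) : 1 ≤ ‖1 - X‖ := by
  obtain ⟨v, hv, hXv⟩ := Matrix.exists_mulVec_eq_zero_iff.mpr hX
  have h : (1 - X) *ᵥ v = (1 : ℂ) • v := by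
    rw [Matrix.sub_mulVec, Matrix.one_mulVec, hXv]; simp
  have h2 := sq_le_fsq_of_eig hv h
  simp only [norm_one, one_pow] at h2
  rw [norm_eq_sqrt_fsq]
  have := Real.sqrt_le_sqrt h2
  simpa using this

lemma exists_unitary_diag {A : Mat} (hA : A ∈ Matrix.unitaryGroup (Fin d) ℂ)
    (h1 : ‖A - 1‖ < 1) :
    ∃ u ∈ Matrix.unitaryGroup (Fin d) ℂ, ∃ w : Fin d → ℂ,
      A = u * Matrix.diagonal w * star u := by
  have hAs : A * star A = 1 := Matrix.mem_unitaryGroup_iff.mp hA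
  have hsA : star A * A = 1 := Matrix.mem_unitaryGroup_iff'.mp hA
  -- 1 + A is invertible
  have hdet1A : IsUnit (1 + A).det := by
    by_contra hd
    have hdz : (1 + A).det = 0 := by
      by_contra h0; exact hd (isUnit_iff_ne_zero.mpr h0)
    obtain ⟨v, hv, hv0⟩ := Matrix.exists_mulVec_eq_zero_iff.mpr hdz
    have hAv : A *ᵥ v = -v := by
      have := hv0
      rw [Matrix.add_mulVec, Matrix.one_mulVec] at this
      linear_combination (norm := module) this
    have heig : (A - 1) *ᵥ v = (-2 : ℂ) • v := by
      rw [Matrix.sub_mulVec, Matrix.one_mulVec, hAv]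
      module
    have h4 := sq_le_fsq_of_eig hv heig
    rw [← sq_norm] at h4
    have : ‖(-2 : ℂ)‖ = 2 := by simp
    rw [this] at h4
    have hnn : (0:ℝ) ≤ ‖A - 1‖ := norm_nonneg _
    nlinarith [h4, h1, hnn]
  set N := (1 + A)⁻¹ with hN
  have hNmul : (1 + A) * N = 1 := Matrix.mul_nonsing_inv _ hdet1A
  have hmulN : N * (1 + A) = 1 := Matrix.nonsing_inv_mul _ hdet1A
  have hc : (1 - A) * (1 + A) = (1 + A) * (1 - A) := by noncomm_ring
  have hcomm : N * (1 - A) = (1 - A) * N := by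
    calc N * (1 - A) = N * (1 - A) * ((1 + A) * N) := by rw [hNmul, Matrix.mul_one]
    _ = N * ((1 - A) * (1 + A)) * N := by noncomm_ring
    _ = N * ((1 + A) * (1 - A)) * N := by rw [hc]
    _ = (N * (1 + A)) * ((1 - A) * N) := by noncomm_ring
    _ = (1 - A) * N := by rw [hmulN, Matrix.one_mul]
  set B := Complex.I • ((1 - A) * N) with hBdef
  have hSinv : (star A)⁻¹ = A := Matrix.inv_eq_right_inv hsA
  have hB : B.IsHermitian := by
    unfold Matrix.IsHermitian
    have e1 : Bᴴ = (-Complex.I) • (Nᴴ * (1 - A)ᴴ) := by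
      rw [hBdef, Matrix.conjTranspose_smul, Matrix.conjTranspose_mul]
      simp [Complex.conj_I]
    have e2 : Nᴴ = N * A := by
      rw [hN, Matrix.conjTranspose_nonsing_inv]
      have : (1 + A)ᴴ = star A * (1 + A) := by
        rw [Matrix.conjTranspose_add, Matrix.conjTranspose_one,
          ← Matrix.star_eq_conjTranspose]
        rw [Matrix.mul_add, Matrix.mul_one, hsA, add_comm]
      rw [this, Matrix.mul_inv_rev, hSinv]
    have e3 : (1 - A)ᴴ = star A * (A - 1) := by
      rw [Matrix.conjTranspose_sub, Matrix.conjTranspose_one,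
        ← Matrix.star_eq_conjTranspose]
      rw [Matrix.mul_sub, Matrix.mul_one, hsA]
    rw [e1, e2, e3]
    have e4 : N * A * (star A * (A - 1)) = N * (A - 1) := by
      calc N * A * (star A * (A - 1)) = N * (A * star A) * (A - 1) := by noncomm_ring
      _ = N * (A - 1) := by rw [hAs, Matrix.mul_one]
    rw [e4]
    have e5 : N * (A - 1) = -(N * (1 - A)) := by noncomm_ring
    rw [e5, smul_neg, neg_smul, neg_neg, hcomm, hBdef]
  -- spectral theorem for B
  set u := Matrix.IsHermitian.eigenvectorUnitary hB with hu
  set f : Fin d → ℂ := fun k => (hB.eigenvalues k : ℂ) with hf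
  have hspec : B = (u : Mat) * Matrix.diagonal f * star (u : Mat) := by
    have := hB.spectral_theorem
    rw [Unitary.conjStarAlgAut_apply] at this
    exact this
  have huu : (u : Mat) * star (u : Mat) = 1 := Matrix.mem_unitaryGroup_iff.mp u.2
  have hsuu : star (u : Mat) * (u : Mat) = 1 := Matrix.mem_unitaryGroup_iff'.mp u.2
  -- the equation (B + i) A = i - B
  have hBA : (B + Complex.I • 1) * A = Complex.I • (1 : Mat) - B := by
    have hB1A : B * (1 + A) = Complex.I • ((1 : Mat) - A) := by
      rw [hBdef, smul_mul_assoc, Matrix.mul_assoc, hmulN, Matrix.mul_one]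
    have hexp : B + B * A = Complex.I • (1 : Mat) - Complex.I • A := by
      have := hB1A
      rw [Matrix.mul_add, Matrix.mul_one, smul_sub] at this
      exact this
    have : B * A = Complex.I • (1 : Mat) - Complex.I • A - B := by
      linear_combination (norm := module) hexp
    rw [Matrix.add_mul, this, smul_mul_assoc, Matrix.one_mul]
    module
  -- conjugate the equation by u
  set D := Matrix.diagonal f with hD
  have hconj1 : B + Complex.I • 1 = (u : Mat) * (D + Complex.I • 1) * star (u : Mat) := by
    rw [Matrix.mul_add, Matrix.add_mul, ← hspec]
    congr 1
    rw [mul_smul_comm, smul_mul_assoc, Matrix.mul_one, huu]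
  have hconj2 : Complex.I • (1 : Mat) - B = (u : Mat) * (Complex.I • 1 - D) * star (u : Mat) := by
    rw [Matrix.mul_sub, Matrix.sub_mul, ← hspec]
    congr 1
    rw [mul_smul_comm, smul_mul_assoc, Matrix.mul_one, huu]
  set dd : Fin d → ℂ := fun k => f k + Complex.I with hdd
  have hDI : D + Complex.I • 1 = Matrix.diagonal dd := by
    ext i j
    by_cases hij : i = j <;>
      simp [hD, hdd, Matrix.diagonal_apply, Matrix.one_apply, hij]
  have hddne : ∀ k, dd k ≠ 0 := by
    intro k hk
    have := congrArg Complex.im hk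
    simp [hdd, hf] at this
  have hdddet : IsUnit (Matrix.diagonal dd).det := by
    rw [Matrix.det_diagonal]
    exact isUnit_iff_ne_zero.mpr (Finset.prod_ne_zero_iff.mpr fun k _ => hddne k)
  have hinvdd : (Matrix.diagonal dd)⁻¹ * Matrix.diagonal dd = 1 :=
    Matrix.nonsing_inv_mul _ hdddet
  -- solve for A
  have hkey : Matrix.diagonal dd * (star (u : Mat) * A) = (Complex.I • 1 - D) * star (u : Mat) := by
    have h5 : (u : Mat) * (D + Complex.I • 1) * star (u : Mat) * A
        = (u : Mat) * (Complex.I • 1 - D) * star (u : Mat) := by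
      rw [← hconj1, ← hconj2, hBA]
    have h6 := congrArg (fun X => star (u : Mat) * X) h5
    simp only [← Matrix.mul_assoc] at h6
    rw [hsuu, Matrix.one_mul, Matrix.one_mul] at h6
    rw [hDI] at h6
    rw [Matrix.mul_assoc] at h6
    exact h6
  set W := (Matrix.diagonal dd)⁻¹ * (Complex.I • 1 - D) with hW
  have hsuA : star (u : Mat) * A = W * star (u : Mat) := by
    have := congrArg (fun X => (Matrix.diagonal dd)⁻¹ * X) hkey
    simp only [← Matrix.mul_assoc] at this
    rw [hinvdd, Matrix.one_mul] at this
    rw [this, hW, Matrix.mul_assoc]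
  have hfinal : A = (u : Mat) * W * star (u : Mat) := by
    have := congrArg (fun X => (u : Mat) * X) hsuA
    simp only [← Matrix.mul_assoc] at this
    rw [huu, Matrix.one_mul] at this
    rw [this]
  have hWdiag : W = Matrix.diagonal (fun k => Ring.inverse dd k * (Complex.I - f k)) := by
    rw [hW, Matrix.inv_diagonal]
    have : Complex.I • (1 : Mat) - D = Matrix.diagonal (fun k => Complex.I - f k) := by
      ext i j
      by_cases hij : i = j <;>
        simp [hD, Matrix.diagonal_apply, Matrix.one_apply, hij]
    rw [this, Matrix.diagonal_mul_diagonal]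
  exact ⟨(u : Mat), u.2, _, by rw [hfinal, hWdiag]⟩

lemma diag_comm_fsq (w : Fin d → ℂ) (Y : Mat) :
    fsq (Matrix.diagonal w * Y - Y * Matrix.diagonal w)
      ≤ 2 * fsq (Matrix.diagonal w - 1) * fsq Y := by
  have hs : fsq (Matrix.diagonal w - 1) = ∑ k, ‖w k - 1‖ ^ 2 := by
    have hD : Matrix.diagonal w - 1 = Matrix.diagonal (fun k => w k - 1) := by
      ext i j
      by_cases hij : i = j <;>
        simp [Matrix.diagonal_apply, Matrix.one_apply, hij]
    rw [hD, fsq]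
    refine Finset.sum_congr rfl fun i _ => ?_
    rw [Finset.sum_eq_single i]
    · simp [Matrix.diagonal_apply]
    · intro j _ hji
      simp [Matrix.diagonal_apply, (Ne.symm hji)]
    · intro hn; exact absurd (Finset.mem_univ i) hn
  have claim : ∀ i j : Fin d, ‖w i - w j‖ ^ 2 ≤ 2 * ∑ k, ‖w k - 1‖ ^ 2 := by
    intro i j
    by_cases hij : i = j
    · subst hij
      have : (0:ℝ) ≤ ∑ k, ‖w k - 1‖ ^ 2 := by positivity
      simp only [sub_self, norm_zero]
      nlinarith
    · have htri : ‖w i - w j‖ ≤ ‖w i - 1‖ + ‖w j - 1‖ := by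
        have := norm_sub_le_norm_sub_add_norm_sub (w i) 1 (w j)
        calc ‖w i - w j‖ ≤ ‖w i - 1‖ + ‖1 - w j‖ := this
        _ = ‖w i - 1‖ + ‖w j - 1‖ := by rw [norm_sub_rev (1 : ℂ)]
      have hsub : ‖w i - 1‖ ^ 2 + ‖w j - 1‖ ^ 2 ≤ ∑ k, ‖w k - 1‖ ^ 2 := by
        have : ({i, j} : Finset (Fin d)) ⊆ Finset.univ := Finset.subset_univ _
        have hp := Finset.sum_le_sum_of_subset_of_nonneg this
          (fun k _ _ => by positivity : ∀ k ∈ Finset.univ,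
            k ∉ ({i, j} : Finset (Fin d)) → 0 ≤ ‖w k - 1‖ ^ 2)
        rwa [Finset.sum_pair hij] at hp
      have h0i : (0:ℝ) ≤ ‖w i - 1‖ := norm_nonneg _
      have h0j : (0:ℝ) ≤ ‖w j - 1‖ := norm_nonneg _
      have hsq : ‖w i - w j‖ ^ 2 ≤ (‖w i - 1‖ + ‖w j - 1‖) ^ 2 :=
        pow_le_pow_left₀ (norm_nonneg _) htri 2
      nlinarith [sq_nonneg (‖w i - 1‖ - ‖w j - 1‖)]
  rw [hs]
  have hLHS : fsq (Matrix.diagonal w * Y - Y * Matrix.diagonal w)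
      = ∑ i, ∑ j, ‖(Matrix.diagonal w * Y - Y * Matrix.diagonal w) i j‖ ^ 2 := rfl
  have hfY : fsq Y = ∑ i, ∑ j, ‖Y i j‖ ^ 2 := rfl
  rw [hLHS, hfY]
  calc ∑ i, ∑ j, ‖(Matrix.diagonal w * Y - Y * Matrix.diagonal w) i j‖ ^ 2
      ≤ ∑ i, ∑ j, (2 * ∑ k, ‖w k - 1‖ ^ 2) * ‖Y i j‖ ^ 2 := by
        refine Finset.sum_le_sum fun i _ => Finset.sum_le_sum fun j _ => ?_
        have he : (Matrix.diagonal w * Y - Y * Matrix.diagonal w) i j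
            = (w i - w j) * Y i j := by
          simp [Matrix.sub_apply, Matrix.diagonal_mul, Matrix.mul_diagonal]
          ring
        rw [he, norm_mul, mul_pow]
        have := claim i j
        have h0 : (0:ℝ) ≤ ‖Y i j‖ ^ 2 := by positivity
        nlinarith
    _ = (2 * ∑ k, ‖w k - 1‖ ^ 2) * ∑ i, ∑ j, ‖Y i j‖ ^ 2 := by
        simp only [← Finset.mul_sum]

lemma unitary_comm_bound {A : Mat} (hA : A ∈ Matrix.unitaryGroup (Fin d) ℂ)
    (h1 : ‖A - 1‖ < 1) (Y : Mat) :
    ‖A * Y - Y * A‖ ≤ Real.sqrt 2 * ‖A - 1‖ * ‖Y‖ := by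
  obtain ⟨u, hu, w, hAw⟩ := exists_unitary_diag hA h1
  set D := Matrix.diagonal w with hD
  set Y' := star u * Y * u with hY'
  have huu : u * star u = 1 := Matrix.mem_unitaryGroup_iff.mp hu
  have hsuu : star u * u = 1 := Matrix.mem_unitaryGroup_iff'.mp hu
  have hYY : u * Y' * star u = Y := by
    rw [hY']
    calc u * (star u * Y * u) * star u = (u * star u) * Y * (u * star u) := by
          noncomm_ring
    _ = Y := by rw [huu, Matrix.one_mul, Matrix.mul_one]
  have hid : A * Y - Y * A = u * (D * Y' - Y' * D) * star u := by
    rw [hAw, ← hYY]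
    calc u * D * star u * (u * Y' * star u) - u * Y' * star u * (u * D * star u)
        = u * (D * (star u * u) * Y' - Y' * (star u * u) * D) * star u := by noncomm_ring
    _ = u * (D * Y' - Y' * D) * star u := by
        rw [hsuu, Matrix.mul_one, Matrix.mul_one]
  have hA1 : A - 1 = u * (D - 1) * star u := by
    rw [hAw, Matrix.mul_sub, Matrix.sub_mul, Matrix.mul_one, huu]
  rw [hid, norm_conj _ hu, hA1, norm_conj _ hu, ← hYY, norm_conj _ hu]
  have hcore := diag_comm_fsq w Y'
  rw [norm_eq_sqrt_fsq, norm_eq_sqrt_fsq, norm_eq_sqrt_fsq]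
  have h2 : Real.sqrt 2 * Real.sqrt (fsq (D - 1)) * Real.sqrt (fsq Y')
      = Real.sqrt (2 * fsq (D - 1) * fsq Y') := by
    rw [Real.sqrt_mul (mul_nonneg (by norm_num) (fsq_nonneg _)) (fsq Y'),
      Real.sqrt_mul (by norm_num : (0:ℝ) ≤ 2)]
  rw [h2]
  exact Real.sqrt_le_sqrt hcore

lemma commutator_norm_bound (a b : Matrix.unitaryGroup (Fin d) ℂ)
    (h1 : ‖(a : Mat) - 1‖ < 1) :
    ‖((⁅a, b⁆ : Matrix.unitaryGroup (Fin d) ℂ) : Mat) - 1‖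
      ≤ Real.sqrt 2 * ‖(a : Mat) - 1‖ * ‖(b : Mat) - 1‖ := by
  have haa : (a : Mat) * star (a : Mat) = 1 := Matrix.mem_unitaryGroup_iff.mp a.2
  have hbb : (b : Mat) * star (b : Mat) = 1 := Matrix.mem_unitaryGroup_iff.mp b.2
  have hval : ((⁅a, b⁆ : Matrix.unitaryGroup (Fin d) ℂ) : Mat)
      = (a : Mat) * (b : Mat) * star (a : Mat) * star (b : Mat) := by
    rw [commutatorElement_def]
    rfl
  have hid : ((⁅a, b⁆ : Matrix.unitaryGroup (Fin d) ℂ) : Mat) - 1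
      = ((a : Mat) * (b : Mat) - (b : Mat) * (a : Mat)) * (star (a : Mat) * star (b : Mat)) := by
    rw [hval]
    calc (a : Mat) * b * star (a : Mat) * star (b : Mat) - 1
        = (a : Mat) * b * star (a : Mat) * star (b : Mat)
          - (b : Mat) * ((a : Mat) * star (a : Mat)) * star (b : Mat) := by
          rw [haa, Matrix.mul_one, hbb]
    _ = ((a : Mat) * b - (b : Mat) * a) * (star (a : Mat) * star (b : Mat)) := by noncomm_ring
  have hmem : star (a : Mat) * star (b : Mat) ∈ Matrix.unitaryGroup (Fin d) ℂ :=
    mul_mem (Unitary.star_mem a.2) (Unitary.star_mem b.2)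
  rw [hid, norm_mul_unitary _ hmem]
  have hid2 : (a : Mat) * b - (b : Mat) * a
      = (a : Mat) * ((b : Mat) - 1) - ((b : Mat) - 1) * (a : Mat) := by noncomm_ring
  rw [hid2]
  exact unitary_comm_bound a.2 h1 _

lemma frobNorm_eq (M : Mat) : Real.sqrt ((M * Mᴴ).trace.re) = ‖M‖ := by
  rw [fsq_eq_trace, norm_eq_sqrt_fsq]

theorem main_aux {d : ℕ}
    (g h : Matrix.unitaryGroup (Fin d) ℂ)
    (hg : ‖(g : Matrix (Fin d) (Fin d) ℂ) - 1‖ < 1 / Real.sqrt 2)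
    (hh : ‖(h : Matrix (Fin d) (Fin d) ℂ) - 1‖ < 1 / Real.sqrt 2)
    (hne : g * h ≠ h * g) :
    Infinite (Subgroup.closure ({g, h} : Set (Matrix.unitaryGroup (Fin d) ℂ))) := by
  classical
  by_contra hinf
  rw [not_infinite_iff_finite] at hinf
  set H := Subgroup.closure ({g, h} : Set (Matrix.unitaryGroup (Fin d) ℂ)) with hH
  haveI : Finite H := hinf
  have hs2 : (1:ℝ) < Real.sqrt 2 := by
    rw [show (1:ℝ) = Real.sqrt 1 by simp]
    exact Real.sqrt_lt_sqrt (by norm_num) (by norm_num)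
  have hs2pos : (0:ℝ) < Real.sqrt 2 := by linarith
  have hlt1 : 1 / Real.sqrt 2 < 1 := by
    rw [div_lt_one hs2pos]; exact hs2
  have hg1 : ‖(g : Matrix (Fin d) (Fin d) ℂ) - 1‖ < 1 := lt_trans hg hlt1
  have hh1 : ‖(h : Matrix (Fin d) (Fin d) ℂ) - 1‖ < 1 := lt_trans hh hlt1
  set q := Real.sqrt 2 * ‖(g : Matrix (Fin d) (Fin d) ℂ) - 1‖ with hqdef
  have hq1 : q < 1 := by
    have := mul_lt_mul_of_pos_left hg hs2pos
    rwa [mul_one_div, div_self (ne_of_gt hs2pos)] at this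
  set B : ℕ → Matrix.unitaryGroup (Fin d) ℂ :=
    fun n => Nat.rec h (fun _ x => ⁅g, x⁆) n with hBdef
  have hB0 : B 0 = h := rfl
  have hBs : ∀ n, B (n + 1) = ⁅g, B n⁆ := fun n => rfl
  have hgH : g ∈ H := Subgroup.subset_closure (by simp)
  have hhH : h ∈ H := Subgroup.subset_closure (by simp)
  have hmem : ∀ n, B n ∈ H := by
    intro n
    induction n with
    | zero => exact hhH
    | succ n ih =>
      rw [hBs, commutatorElement_def]
      exact mul_mem (mul_mem (mul_mem hgH ih) (inv_mem hgH)) (inv_mem ih)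
  have hdec : ∀ n, ‖((B (n + 1) : Matrix (Fin d) (Fin d) ℂ)) - 1‖
      ≤ q * ‖((B n : Matrix (Fin d) (Fin d) ℂ)) - 1‖ := by
    intro n
    rw [hBs, hqdef, mul_assoc]
    exact le_trans (commutator_norm_bound g (B n) hg1) (le_of_eq (mul_assoc _ _ _))
  have hmono : ∀ n, ‖((B n : Matrix (Fin d) (Fin d) ℂ)) - 1‖
      ≤ ‖((h : Matrix (Fin d) (Fin d) ℂ)) - 1‖ := by
    intro n
    induction n with
    | zero => rw [hB0]
    | succ n ih =>
      refine le_trans (hdec n) (le_trans ?_ ih)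
      exact mul_le_of_le_one_left (norm_nonneg _) hq1.le
  have hpos : ∀ n, B n ≠ 1 → 0 < ‖((B n : Matrix (Fin d) (Fin d) ℂ)) - 1‖ := by
    intro n hn
    rw [norm_pos_iff]
    intro hzero
    rw [sub_eq_zero] at hzero
    exact hn (Subtype.ext hzero)
  by_cases hall : ∀ n, B n ≠ 1
  · have hstrict : StrictAnti (fun n => ‖((B n : Matrix (Fin d) (Fin d) ℂ)) - 1‖) := by
      refine strictAnti_nat_of_succ_lt fun n => ?_
      exact lt_of_le_of_lt (hdec n) (mul_lt_of_lt_one_left (hpos n (hall n)) hq1)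
    have hinj : Function.Injective B := fun a b hab => hstrict.injective (by rw [hab])
    have hinjH : Function.Injective (fun n => (⟨B n, hmem n⟩ : H)) := by
      intro a b hab
      exact hinj (congrArg Subtype.val hab)
    have := Infinite.of_injective _ hinjH
    exact (not_finite_iff_infinite.mpr this) hinf
  · push_neg at hall
    have hex : ∃ n, B n = 1 := hall
    have hfind := Nat.find_spec hex
    have hmin : ∀ j, j < Nat.find hex → B j ≠ 1 := fun j hj => Nat.find_min hex hj
    have hne0 : Nat.find hex ≠ 0 := by
      intro h0
      rw [h0, hB0] at hfind
      exact hne (by rw [hfind, mul_one, one_mul])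
    have hne1 : Nat.find hex ≠ 1 := by
      intro h1
      have hb1 : B 1 = ⁅g, h⁆ := rfl
      rw [h1, hb1] at hfind
      exact hne (commutatorElement_eq_one_iff_commute.mp hfind).eq
    obtain ⟨k, hk⟩ : ∃ k, Nat.find hex = k + 2 := ⟨Nat.find hex - 2, by omega⟩
    set C := B k with hC
    set z := B (k + 1) with hz
    have hzC : z = ⁅g, C⁆ := hBs k
    have hzne : z ≠ 1 := hmin (k + 1) (by omega)
    have hgz : Commute g z := by
      apply commutatorElement_eq_one_iff_commute.mp
      rw [← hBs (k + 1), ← hk]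
      exact hfind
    obtain ⟨m, hmpos, hzmU⟩ : ∃ m, 0 < m ∧ z ^ m = 1 := by
      refine ⟨orderOf (⟨z, hmem (k + 1)⟩ : H), orderOf_pos _, ?_⟩
      have h2 := congrArg Subtype.val (pow_orderOf_eq_one (⟨z, hmem (k + 1)⟩ : H))
      simpa only [SubmonoidClass.coe_pow, OneMemClass.coe_one] using h2
    set zv := (z : Matrix (Fin d) (Fin d) ℂ) with hzv
    set Cv := (C : Matrix (Fin d) (Fin d) ℂ) with hCvdef
    have hzm : zv ^ m = 1 := by
      have h2 := congrArg Subtype.val hzmU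
      simpa only [SubmonoidClass.coe_pow, OneMemClass.coe_one] using h2
    have hconj : ∀ i : ℕ, g ^ i * C * (g ^ i)⁻¹ = z ^ i * C := by
      intro i
      induction i with
      | zero => simp
      | succ i ih =>
        have hzC2 : g * C * g⁻¹ = z * C := by
          rw [hzC, commutatorElement_def]
          group
        calc g ^ (i + 1) * C * (g ^ (i + 1))⁻¹
            = g * (g ^ i * C * (g ^ i)⁻¹) * g⁻¹ := by group
        _ = g * (z ^ i * C) * g⁻¹ := by rw [ih]
        _ = z ^ i * (g * C * g⁻¹) := by
            rw [← mul_assoc, ← mul_assoc, (hgz.pow_right i).eq]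
            group
        _ = z ^ i * (z * C) := by rw [hzC2]
        _ = z ^ (i + 1) * C := by rw [pow_succ, mul_assoc]
    have hdist : ∀ i : ℕ, ‖zv ^ i * Cv - 1‖ = ‖Cv - 1‖ := by
      intro i
      have huvmem : ((g : Matrix (Fin d) (Fin d) ℂ)) ^ i ∈ Matrix.unitaryGroup (Fin d) ℂ :=
        pow_mem g.2 i
      have huu : ((g : Matrix (Fin d) (Fin d) ℂ)) ^ i
          * star (((g : Matrix (Fin d) (Fin d) ℂ)) ^ i) = 1 :=
        Matrix.mem_unitaryGroup_iff.mp huvmem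
      have he : zv ^ i * Cv = ((g : Matrix (Fin d) (Fin d) ℂ)) ^ i * Cv
          * star (((g : Matrix (Fin d) (Fin d) ℂ)) ^ i) := by
        have hcoe := congrArg Subtype.val (hconj i)
        simp only [SubmonoidClass.coe_pow, Matrix.UnitaryGroup.mul_val,
          Matrix.UnitaryGroup.inv_val] at hcoe
        exact hcoe.symm
      rw [he]
      have he2 : ((g : Matrix (Fin d) (Fin d) ℂ)) ^ i * Cv
            * star (((g : Matrix (Fin d) (Fin d) ℂ)) ^ i) - 1
          = ((g : Matrix (Fin d) (Fin d) ℂ)) ^ i * (Cv - 1)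
            * star (((g : Matrix (Fin d) (Fin d) ℂ)) ^ i) := by
        rw [Matrix.mul_sub, Matrix.sub_mul, Matrix.mul_one, huu]
      rw [he2, norm_conj _ huvmem]
    set P := ((m : ℂ))⁻¹ • ∑ i ∈ Finset.range m, zv ^ i with hP
    have hmC : (m : ℂ) ≠ 0 := Nat.cast_ne_zero.mpr hmpos.ne'
    have hzP : zv * P = P := by
      have hsum : ∑ i ∈ Finset.range m, zv ^ (i + 1) = ∑ i ∈ Finset.range m, zv ^ i := by
        have e1 := Finset.sum_range_succ' (fun i => zv ^ i) m
        have e2 := Finset.sum_range_succ (fun i => zv ^ i) m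
        rw [e2, hzm, pow_zero] at e1
        exact (add_right_cancel e1).symm
      rw [hP, mul_smul_comm, Finset.mul_sum]
      congr 1
      rw [← hsum]
      exact Finset.sum_congr rfl fun i _ => (pow_succ' zv i).symm
    have hzvne : zv ≠ 1 := by
      intro hzz
      exact hzne (Subtype.ext hzz)
    have hdetP : P.det = 0 := by
      by_contra hd
      have hU : IsUnit P.det := isUnit_iff_ne_zero.mpr hd
      have hzero : (zv - 1) * P = 0 := by
        rw [Matrix.sub_mul, hzP, Matrix.one_mul, sub_self]
      have := congrArg (fun X => X * P⁻¹) hzero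
      simp only [Matrix.zero_mul, Matrix.mul_assoc, Matrix.mul_nonsing_inv _ hU,
        Matrix.mul_one] at this
      exact hzvne (by rwa [sub_eq_zero] at this)
    have hPC1 : P * Cv - 1 = ((m : ℂ))⁻¹ • ∑ i ∈ Finset.range m, (zv ^ i * Cv - 1) := by
      rw [Finset.sum_sub_distrib, Finset.sum_const, Finset.card_range, smul_sub,
        hP, smul_mul_assoc, Finset.sum_mul]
      congr 1
      rw [← Nat.cast_smul_eq_nsmul ℂ m (1 : Matrix (Fin d) (Fin d) ℂ), smul_smul,
        inv_mul_cancel₀ hmC, one_smul]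
    have hPC : ‖P * Cv - 1‖ ≤ ‖Cv - 1‖ := by
      rw [hPC1, norm_smul]
      have hn1 : ‖((m : ℂ))⁻¹‖ = ((m : ℝ))⁻¹ := by
        rw [norm_inv, Complex.norm_natCast]
      rw [hn1]
      have hsum_le : ‖∑ i ∈ Finset.range m, (zv ^ i * Cv - 1)‖
          ≤ ∑ i ∈ Finset.range m, ‖zv ^ i * Cv - 1‖ := norm_sum_le _ _
      have hsum_eq : ∑ i ∈ Finset.range m, ‖zv ^ i * Cv - 1‖ = m * ‖Cv - 1‖ := by
        rw [Finset.sum_congr rfl fun i _ => hdist i, Finset.sum_const, Finset.card_range,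
          nsmul_eq_mul]
      have hmRpos : (0:ℝ) < (m : ℝ) := Nat.cast_pos.mpr hmpos
      calc ((m : ℝ))⁻¹ * ‖∑ i ∈ Finset.range m, (zv ^ i * Cv - 1)‖
          ≤ ((m : ℝ))⁻¹ * (m * ‖Cv - 1‖) := by
            rw [← hsum_eq]
            exact mul_le_mul_of_nonneg_left hsum_le (by positivity)
      _ = ‖Cv - 1‖ := by field_simp
    have hdetPC : (P * Cv).det = 0 := by
      rw [Matrix.det_mul, hdetP, zero_mul]
    have h1le := one_le_norm_one_sub_of_det_eq_zero hdetPC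
    rw [norm_sub_rev] at h1le
    have hCh : ‖Cv - 1‖ ≤ ‖((h : Matrix (Fin d) (Fin d) ℂ)) - 1‖ := hmono k
    linarith

end FrobAux

attribute [local instance] Matrix.frobeniusSeminormedAddCommGroup
  Matrix.frobeniusNormedAddCommGroup Matrix.frobeniusNormedSpace

/-- If `g, h ∈ SU(d)` satisfy `‖g − I‖ < 1/√2`, `‖h − I‖ < 1/√2` and `g h ≠ h g`,
then the subgroup generated by `g` and `h` is infinite. -/
theorem infinite_subgroup_of_close_to_identity {d : ℕ}
    (g h : Matrix.unitaryGroup (Fin d) ℂ)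
    (hgdet : (g : Matrix (Fin d) (Fin d) ℂ).det = 1)
    (hhdet : (h : Matrix (Fin d) (Fin d) ℂ).det = 1)
    (hg : frobNorm ((g : Matrix (Fin d) (Fin d) ℂ) - 1) < 1 / Real.sqrt 2)
    (hh : frobNorm ((h : Matrix (Fin d) (Fin d) ℂ) - 1) < 1 / Real.sqrt 2)
    (hne : g * h ≠ h * g) :
    Infinite (Subgroup.closure ({g, h} : Set (Matrix.unitaryGroup (Fin d) ℂ))) := by
  have e1 : frobNorm ((g : Matrix (Fin d) (Fin d) ℂ) - 1)
      = ‖(g : Matrix (Fin d) (Fin d) ℂ) - 1‖ := FrobAux.frobNorm_eq _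
  have e2 : frobNorm ((h : Matrix (Fin d) (Fin d) ℂ) - 1)
      = ‖(h : Matrix (Fin d) (Fin d) ℂ) - 1‖ := FrobAux.frobNorm_eq _
  rw [e1] at hg
  rw [e2] at hh
  exact FrobAux.main_aux g h hg hh hne
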